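/- For square matrices A (m×m) and B (n×n) over an algebraically closed field, the linear operator X ↦ A·X − X·B on m×n matrices has eigenvalues exactly λ − μ where λ is an eigenvalue of A and μ an eigenvalue of B. -/

import Mathlib

open Polynomial Matrix

theorem my_eval_charpoly {K : Type*} [CommRing K] {m : ℕ} (A : Matrix (Fin m) (Fin m) K) (t : K) :
    A.charpoly.eval t = (t • (1 : Matrix (Fin m) (Fin m) K) - A).det := by
  rw [Matrix.charpoly, ← Polynomial.coe_evalRingHom, RingHom.map_det]
  congr 1
  ext i j
  by_cases h : i = j <;>
    simp [Matrix.charmatrix_apply, h, Matrix.one_apply, Matrix.smul_apply, Matrix.sub_apply,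
      Matrix.diagonal_apply]

theorem my_root_iff {K : Type*} [Field K] {m : ℕ} (A : Matrix (Fin m) (Fin m) K) (t : K) :
    A.charpoly.IsRoot t ↔ (A - t • 1).det = 0 := by
  have : A - t • 1 = -(t • (1 : Matrix (Fin m) (Fin m) K) - A) := (neg_sub _ _).symm
  rw [IsRoot, my_eval_charpoly, this, Matrix.det_neg]
  constructor
  · intro h; rw [h, mul_zero]
  · intro h
    rcases mul_eq_zero.mp h with h | h
    · exact absurd h (pow_ne_zero _ (by norm_num))
    · exact h

theorem my_aeval_comm {K : Type*} [Field K] {m n : ℕ}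
    {A : Matrix (Fin m) (Fin m) K} {B : Matrix (Fin n) (Fin n) K}
    {X : Matrix (Fin m) (Fin n) K} (h : A * X = X * B) (p : K[X]) :
    (aeval A p) * X = X * (aeval B p) := by
  induction p using Polynomial.induction_on' with
  | add p q hp hq => simp [map_add, Matrix.add_mul, Matrix.mul_add, hp, hq]
  | monomial k a =>
    simp only [aeval_monomial]
    have hpow : ∀ k : ℕ, A ^ k * X = X * B ^ k := by
      intro k
      induction k with
      | zero => simp
      | succ k ih =>
        rw [pow_succ, pow_succ, Matrix.mul_assoc, h, ← Matrix.mul_assoc, ih, Matrix.mul_assoc]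
    rw [Matrix.mul_assoc, hpow, Algebra.algebraMap_eq_smul_one, Algebra.algebraMap_eq_smul_one]
    simp [Matrix.smul_mul, Matrix.mul_smul]

theorem my_det_aeval_prod {K : Type*} [Field K] {m : ℕ} (A' : Matrix (Fin m) (Fin m) K)
    (s : Multiset K) :
    ((aeval A') (s.map (fun μ => Polynomial.X - C μ)).prod).det
      = (s.map (fun μ => (A' - μ • 1).det)).prod := by
  induction s using Multiset.induction_on with
  | empty => simp
  | cons a s ih =>
    simp [Multiset.map_cons, Multiset.prod_cons, _root_.map_mul, Matrix.det_mul, ih,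
      map_sub, aeval_X, aeval_C, Algebra.algebraMap_eq_smul_one]

/-- Over an algebraically closed field, the eigenvalues of the operator
`X ↦ A·X − X·B` on `m×n` matrices are exactly the differences `λ − μ` of eigenvalues
of `A` and `B`. -/
theorem sylvester_operator_eigenvalues {K : Type*} [Field K] [IsAlgClosed K] {m n : ℕ}
    (A : Matrix (Fin m) (Fin m) K) (B : Matrix (Fin n) (Fin n) K) (c : K) :
    (∃ X : Matrix (Fin m) (Fin n) K, X ≠ 0 ∧ A * X - X * B = c • X) ↔
    (∃ lam μ : K, A.charpoly.IsRoot lam ∧ B.charpoly.IsRoot μ ∧ c = lam - μ) := by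
  constructor
  · rintro ⟨X, hX, hAXB⟩
    have h1 : (A - c • 1) * X = X * B := by
      rw [Matrix.sub_mul, Matrix.smul_mul, Matrix.one_mul, sub_eq_iff_eq_add]
      rw [sub_eq_iff_eq_add] at hAXB
      rw [hAXB, add_comm]
    set A' := A - c • (1 : Matrix (Fin m) (Fin m) K) with hA'
    have h2 : (aeval A' B.charpoly) * X = 0 := by
      rw [my_aeval_comm h1, Matrix.aeval_self_charpoly, Matrix.mul_zero]
    have hdet : (aeval A' B.charpoly).det = 0 := by
      by_contra hd
      apply hX
      calc X = ((aeval A' B.charpoly)⁻¹ * (aeval A' B.charpoly)) * X := by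
              rw [Matrix.nonsing_inv_mul _ (Ne.isUnit hd), Matrix.one_mul]
        _ = (aeval A' B.charpoly)⁻¹ * ((aeval A' B.charpoly) * X) := by rw [Matrix.mul_assoc]
        _ = 0 := by rw [h2, Matrix.mul_zero]
    have hsplit : B.charpoly = (B.charpoly.roots.map (fun μ => Polynomial.X - C μ)).prod :=
      Polynomial.Splits.eq_prod_roots_of_monic (IsAlgClosed.splits _)
        (Matrix.charpoly_monic B)
    rw [hsplit, my_det_aeval_prod] at hdet
    have h0 := Multiset.prod_eq_zero_iff.mp hdet
    obtain ⟨μ, hμmem, hμdet⟩ := Multiset.mem_map.mp h0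
    refine ⟨c + μ, μ, ?_, ?_, by ring⟩
    · rw [my_root_iff]
      convert hμdet using 2
      rw [hA', add_smul]
      abel
    · exact Polynomial.isRoot_of_mem_roots hμmem
  · rintro ⟨lam, μ, hlam, hmu, rfl⟩
    have hdA : (A - lam • 1).det = 0 := (my_root_iff A lam).mp hlam
    obtain ⟨v, hv0, hv⟩ := Matrix.exists_mulVec_eq_zero_iff.mpr hdA
    have hdB : ((B - μ • 1)ᵀ).det = 0 := by
      rw [Matrix.det_transpose]; exact (my_root_iff B μ).mp hmu
    obtain ⟨w, hw0, hw⟩ := Matrix.exists_mulVec_eq_zero_iff.mpr hdB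
    have hv' : A.mulVec v = lam • v := by
      rwa [Matrix.sub_mulVec, sub_eq_zero, Matrix.smul_mulVec, Matrix.one_mulVec] at hv
    have hw' : Bᵀ.mulVec w = μ • w := by
      rwa [Matrix.transpose_sub, Matrix.transpose_smul, Matrix.transpose_one,
        Matrix.sub_mulVec, sub_eq_zero, Matrix.smul_mulVec, Matrix.one_mulVec] at hw
    refine ⟨Matrix.vecMulVec v w, ?_, ?_⟩
    · obtain ⟨i, hi⟩ := Function.ne_iff.mp hv0
      obtain ⟨j, hj⟩ := Function.ne_iff.mp hw0
      intro h
      have := congrFun (congrFun h i) j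
      simp only [Matrix.vecMulVec_apply, Matrix.zero_apply] at this
      exact (mul_ne_zero (by simpa using hi) (by simpa using hj)) this
    · ext i j
      have h1 : (A * Matrix.vecMulVec v w) i j = (A.mulVec v) i * w j := by
        simp [Matrix.mul_apply, Matrix.vecMulVec_apply, Matrix.mulVec, dotProduct,
          Finset.sum_mul, mul_assoc]
      have h2 : (Matrix.vecMulVec v w * B) i j = v i * (Bᵀ.mulVec w) j := by
        simp only [Matrix.mul_apply, Matrix.vecMulVec_apply, Matrix.mulVec, dotProduct,
          Matrix.transpose_apply, Finset.mul_sum]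
        exact Finset.sum_congr rfl fun k _ => by ring
      simp only [Matrix.sub_apply, h1, h2, hv', hw', Matrix.smul_apply, Pi.smul_apply,
        Matrix.vecMulVec_apply, smul_eq_mul]
      ring
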